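/- arXiv:1904.04903 — 4 statements merged into one kernel-verified Lean document; each statement's English description precedes it below -/
import Mathlib

section
/- The sequence T_d of labeled trees on d nodes, defined by T_1 = 1 and the recursion (d-1) T_d = (1/2) Σ_{a+b=d, a,b≥1} a·b·binom(d,a)·T_a·T_b, satisfies T_d = d^{d-2} for all d ≥ 1. -/
open Polynomial Finset

lemma fd : ∀ (n : ℕ) (p : ℤ[X]), p.degree < n →
    ∑ k ∈ range (n+1), (-1:ℤ)^k * (n.choose k) * p.eval (k:ℤ) = 0 := by
  intro n
  induction n with
  | zero =>
    intro p hp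
    have hp0 : p = 0 := by
      rcases eq_or_ne p 0 with h | h
      · exact h
      · rw [degree_eq_natDegree h] at hp
        exact absurd hp (by exact_mod_cast Nat.not_lt_zero _)
    simp [hp0]
  | succ n ih =>
    intro p hp
    set q : ℤ[X] := p - p.comp (X + 1) with hq
    have hqeval : ∀ k : ℕ, q.eval (k:ℤ) = p.eval (k:ℤ) - p.eval ((k:ℤ)+1) := by
      intro k; simp [hq, eval_comp]
    have hXC : (X + 1 : ℤ[X]) = X + C 1 := by simp
    have hqdeg : q.degree < n := by
      rcases eq_or_ne p 0 with h | h
      · rw [hq, h]; simp only [zero_comp, sub_zero, degree_zero]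
        exact bot_lt_iff_ne_bot.2 (by simp)
      · have hc1 : (X + 1 : ℤ[X]).natDegree = 1 := by
          rw [hXC]; exact natDegree_X_add_C (1:ℤ)
        have hlc : p.leadingCoeff = (p.comp (X + 1)).leadingCoeff := by
          rw [leadingCoeff_comp (by rw [hc1]; norm_num), hXC, leadingCoeff_X_add_C]
          simp
        have hcomp0 : p.comp (X + 1) ≠ 0 := by
          intro h0
          apply h
          rw [← leadingCoeff_eq_zero, hlc, h0, leadingCoeff_zero]
        have hdeq : p.degree = (p.comp (X + 1)).degree := by
          rw [degree_eq_natDegree h, degree_eq_natDegree hcomp0,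
            natDegree_comp, hc1, mul_one]
        have hlt := degree_sub_lt hdeq h hlc
        have hnd : p.natDegree < n + 1 := by
          rw [← natDegree_lt_iff_degree_lt h] at hp; exact_mod_cast hp
        have hple : p.degree ≤ (n : WithBot ℕ) := by
          refine le_trans degree_le_natDegree ?_
          exact_mod_cast Nat.lt_succ_iff.mp hnd
        exact lt_of_lt_of_le hlt hple
    have key : ∑ k ∈ range (n+2), (-1:ℤ)^k * ((n+1).choose k) * p.eval (k:ℤ)
        = ∑ k ∈ range (n+1), (-1:ℤ)^k * (n.choose k) * q.eval (k:ℤ) := by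
      have h1 : ∑ k ∈ range (n+2), (-1:ℤ)^k * ((n+1).choose k) * p.eval (k:ℤ)
          = ∑ k ∈ range (n+2), ((-1:ℤ)^k * (n.choose k) * p.eval (k:ℤ)
            + (-1:ℤ)^k * (if k = 0 then (0:ℤ) else (n.choose (k-1) : ℤ)) * p.eval (k:ℤ)) := by
        apply Finset.sum_congr rfl
        intro k _
        rcases Nat.eq_zero_or_pos k with h | h
        · subst h; simp
        · obtain ⟨j, rfl⟩ := Nat.exists_eq_add_of_le h
          rw [if_neg (by omega)]
          have : (n+1).choose (1+j) = n.choose (1+j) + n.choose j := by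
            rw [Nat.add_comm 1 j, Nat.choose_succ_succ']
            omega
          have hj : 1 + j - 1 = j := by omega
          rw [this, hj]
          push_cast
          ring
      rw [h1, Finset.sum_add_distrib]
      -- first sum: last term vanishes
      have h2 : ∑ k ∈ range (n+2), (-1:ℤ)^k * (n.choose k) * p.eval (k:ℤ)
          = ∑ k ∈ range (n+1), (-1:ℤ)^k * (n.choose k) * p.eval (k:ℤ) := by
        rw [Finset.sum_range_succ, Nat.choose_succ_self]
        simp
      -- second sum: shift index
      have h3 : ∑ k ∈ range (n+2), (-1:ℤ)^k * (if k = 0 then (0:ℤ) else (n.choose (k-1) : ℤ)) * p.eval (k:ℤ)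
          = ∑ k ∈ range (n+1), -((-1:ℤ)^k * (n.choose k) * p.eval ((k:ℤ)+1)) := by
        rw [Finset.sum_range_succ']
        simp only [if_neg (Nat.succ_ne_zero _), Nat.add_sub_cancel, if_pos rfl]
        push_cast
        simp only [mul_zero, zero_mul, add_zero]
        apply Finset.sum_congr rfl
        intro k _
        ring
      rw [h2, h3, ← Finset.sum_add_distrib]
      apply Finset.sum_congr rfl
      intro k _
      rw [hqeval k]
      ring
    rw [key, ih q hqdeg]

noncomputable def cc (x : ℤ) (k : ℕ) : ℤ := if k = 0 then 1 else x * (x + k)^(k-1)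

lemma cc_mul_pow {x : ℤ} {k n : ℕ} (hk : k ≤ n) (hn : 1 ≤ n) :
    cc x k * (x + k)^(n - k) = x * (x + k)^(n-1) := by
  rcases Nat.eq_zero_or_pos k with h | h
  · subst h; simp only [cc, if_pos rfl, one_mul, Nat.cast_zero, add_zero, Nat.sub_zero]
    cases n with
    | zero => omega
    | succ j => simp [pow_succ]; ring
  · rw [cc, if_neg (by omega), mul_assoc, ← pow_add]
    congr 2
    omega

lemma cc_mul_self {y : ℤ} {m : ℕ} : y * (y + m)^m = cc y m * (y + m) := by
  rcases Nat.eq_zero_or_pos m with h | h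
  · subst h; simp [cc]
  · rw [cc, if_neg (by omega), mul_assoc, ← pow_succ]
    congr 2
    omega

lemma abelP : ∀ (n : ℕ) (x : ℤ),
    ∑ k ∈ range (n+1), C ((n.choose k : ℤ) * cc x k) * (X + C ((n - k : ℕ) : ℤ))^(n-k)
      = (X + C (x + n))^n := by
  intro n
  induction n with
  | zero => intro x; simp [cc]
  | succ m ih =>
    intro x
    set L : ℤ[X] := ∑ k ∈ range (m+2), C (((m+1).choose k : ℤ) * cc x k) * (X + C ((m+1 - k : ℕ) : ℤ))^(m+1-k) with hL
    set R : ℤ[X] := (X + C (x + (m+1:ℕ)))^(m+1) with hR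
    have hderiv : derivative L = derivative R := by
      have hdL : derivative L = ∑ k ∈ range (m+2),
          C (((m+1).choose k : ℤ) * cc x k * ((m+1-k : ℕ) : ℤ)) * (X + C ((m+1 - k : ℕ) : ℤ))^(m-k) := by
        rw [hL, derivative_sum]
        apply Finset.sum_congr rfl
        intro k hk
        rw [derivative_C_mul, derivative_pow, derivative_add, derivative_X, derivative_C, add_zero, mul_one]
        rw [show m + 1 - k - 1 = m - k from by omega]; simp only [C_mul, map_natCast]
        ring
      have hdrop : ∑ k ∈ range (m+2),
          C (((m+1).choose k : ℤ) * cc x k * ((m+1-k : ℕ) : ℤ)) * (X + C ((m+1 - k : ℕ) : ℤ))^(m-k)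
          = ∑ k ∈ range (m+1),
          C (((m+1:ℕ) : ℤ)) * (C ((m.choose k : ℤ) * cc x k) * (X + C ((m+1 - k : ℕ) : ℤ))^(m-k)) := by
        rw [Finset.sum_range_succ]
        simp only [Nat.sub_self, Nat.cast_zero, mul_zero, map_zero, zero_mul, add_zero]
        apply Finset.sum_congr rfl
        intro k hk
        rw [Finset.mem_range] at hk
        have hch : ((m+1).choose k) * (m+1-k) = (m+1) * (m.choose k) := by
          rw [← Nat.choose_succ_right_eq, ← Nat.add_one_mul_choose_eq]
        have hchz : (((m+1).choose k : ℤ)) * (((m+1-k:ℕ)):ℤ) = (((m+1:ℕ)):ℤ) * ((m.choose k : ℤ)) := by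
          exact_mod_cast congrArg (Nat.cast : ℕ → ℤ) hch
        rw [← mul_assoc, ← C_mul]
        congr 1
        rw [C_inj]
        linear_combination (cc x k) * hchz
      have ihc := congrArg (fun p : ℤ[X] => p.comp (X + C 1)) (ih x)
      simp only [Polynomial.sum_comp, mul_comp, pow_comp, add_comp, X_comp, C_comp] at ihc
      have ihc2 : ∑ k ∈ range (m+1), C ((m.choose k : ℤ) * cc x k) * (X + C ((m+1 - k : ℕ) : ℤ))^(m-k)
          = (X + C (x + (m+1:ℕ)))^m := by
        have h4 : (X + C 1 + C (x + (m:ℤ)))^m = (X + C (x + ((m+1:ℕ):ℤ)))^m := by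
          congr 1
          rw [add_assoc, ← C_add]
          congr 1
          push_cast
          ring
        rw [← h4, ← ihc]
        apply Finset.sum_congr rfl
        intro k hk
        rw [Finset.mem_range] at hk
        congr 1
        rw [add_assoc, ← C_add]
        congr 1
        push_cast [show m + 1 - k = (m - k) + 1 from by omega]
        ring
      have hdR : derivative R = C (((m+1:ℕ):ℤ)) * (X + C (x + (m+1:ℕ)))^m := by
        rw [hR, derivative_pow, derivative_add, derivative_X, derivative_C, add_zero, mul_one]
        simp
      rw [hdL, hdrop, ← Finset.mul_sum, ihc2, hdR]
    -- now L - R is constant; evaluate at t0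
    have hconst : L - R = C ((L - R).coeff 0) := by
      have h0 : derivative (L - R) = 0 := by rw [derivative_sub, hderiv, sub_self]
      have := natDegree_eq_zero_of_derivative_eq_zero h0
      exact Polynomial.eq_C_of_natDegree_eq_zero this
    set t0 : ℤ := -(x + (m+1:ℕ)) with ht0
    have hevR : R.eval t0 = 0 := by
      rw [hR, eval_pow, eval_add, eval_X, eval_C,
        show t0 + (x + ((m+1:ℕ):ℤ)) = 0 from by rw [ht0]; push_cast; ring]
      exact zero_pow (by omega)
    have hevL : L.eval t0 = 0 := by
      rw [hL, eval_finset_sum]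
      have hterm : ∀ k ∈ range (m+2),
          (C (((m+1).choose k : ℤ) * cc x k) * (X + C ((m+1 - k : ℕ) : ℤ))^(m+1-k)).eval t0
          = x * (-1:ℤ)^(m+1) * ((-1:ℤ)^k * (((m+1).choose k : ℤ)) * ((X + C x : ℤ[X]).eval (k:ℤ))^m) := by
        intro k hk
        rw [Finset.mem_range] at hk
        rw [eval_mul, eval_C, eval_pow, eval_add, eval_X, eval_C]
        have h1 : t0 + ((m+1-k : ℕ) : ℤ) = -(x + k) := by
          rw [ht0]
          push_cast [show ((m+1-k:ℕ):ℤ) = ((m+1:ℕ):ℤ) - (k:ℤ) from by push_cast; omega]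
          ring
        rw [h1, neg_pow]
        have h2 : cc x k * (x + k)^(m+1-k) = x * (x+k)^m := by
          have := cc_mul_pow (x := x) (k := k) (n := m+1) (by omega) (by omega)
          simpa using this
        have h3 : (-1:ℤ)^(m+1-k) = (-1:ℤ)^(m+1) * (-1:ℤ)^k := by
          have : (-1:ℤ)^(m+1-k) * (-1:ℤ)^k = (-1:ℤ)^(m+1) := by
            rw [← pow_add]; congr 1; omega
          have hsq : (-1:ℤ)^k * (-1:ℤ)^k = 1 := by
            rw [← pow_add, ← two_mul, pow_mul]; norm_num
          calc (-1:ℤ)^(m+1-k) = (-1:ℤ)^(m+1-k) * ((-1:ℤ)^k * (-1:ℤ)^k) := by rw [hsq, mul_one]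
            _ = ((-1:ℤ)^(m+1-k) * (-1:ℤ)^k) * (-1:ℤ)^k := by ring
            _ = (-1:ℤ)^(m+1) * (-1:ℤ)^k := by rw [this]
        rw [eval_add, eval_X, eval_C]
        calc ((m+1).choose k : ℤ) * cc x k * ((-1:ℤ)^(m+1-k) * (x + k)^(m+1-k))
            = (-1:ℤ)^(m+1-k) * ((m+1).choose k : ℤ) * (cc x k * (x + k)^(m+1-k)) := by ring
          _ = (-1:ℤ)^(m+1) * (-1:ℤ)^k * ((m+1).choose k : ℤ) * (x * (x+k)^m) := by rw [h2, h3]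
          _ = x * (-1:ℤ)^(m+1) * ((-1:ℤ)^k * ((m+1).choose k : ℤ) * ((k:ℤ) + x)^m) := by
              rw [add_comm (k:ℤ) x]; ring
      rw [Finset.sum_congr rfl hterm, ← Finset.mul_sum]
      have hdeg : ((X + C x : ℤ[X])^m).degree < (m+1 : ℕ) := by
        have : ((X + C x : ℤ[X])^m).degree = m := by
          rw [degree_pow, degree_X_add_C]
          simp
        rw [this]
        exact_mod_cast Nat.lt_succ_self m
      have := fd (m+1) ((X + C x)^m) hdeg
      simp only [eval_pow] at this ⊢
      rw [this, mul_zero]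
    have : (L - R).coeff 0 = 0 := by
      have he : (L - R).eval t0 = (L-R).coeff 0 := by rw [hconst]; simp
      rw [eval_sub, hevL, hevR, sub_zero] at he
      exact he.symm
    have : L - R = 0 := by rw [hconst, this, map_zero]
    have := sub_eq_zero.mp this
    exact this

lemma abel_eval (n : ℕ) (x y : ℤ) :
    ∑ k ∈ range (n+1), (n.choose k : ℤ) * cc x k * (y + ((n-k:ℕ):ℤ))^(n-k)
      = (y + (x + n))^n := by
  have := congrArg (eval y) (abelP n x)
  simpa [eval_finset_sum, mul_assoc] using this

lemma babel (n : ℕ) (x y : ℤ) :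
    (x + y + n) * ∑ k ∈ range (n+1), (n.choose k : ℤ) * cc x k * cc y (n-k)
      = (x + y) * (x + y + n)^n := by
  have E1 : y * (x + y + n)^n
      = ∑ k ∈ range (n+1), (n.choose k : ℤ) * cc x k * cc y (n-k) * (y + ((n-k:ℕ):ℤ)) := by
    rw [show x + y + (n:ℤ) = y + (x + n) by ring, ← abel_eval n x y, Finset.mul_sum]
    apply Finset.sum_congr rfl
    intro k _
    rw [show (n.choose k : ℤ) * cc x k * (y + ((n-k:ℕ):ℤ))^(n-k)
      = (n.choose k : ℤ) * cc x k * ((y + ((n-k:ℕ):ℤ))^(n-k)) from by ring]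
    have := cc_mul_self (y := y) (m := n - k)
    linear_combination ((n.choose k : ℤ) * cc x k) * this
  have E2 : x * (x + y + n)^n
      = ∑ k ∈ range (n+1), (n.choose k : ℤ) * cc x k * cc y (n-k) * (x + (k:ℤ)) := by
    have base := abel_eval n y x
    have base2 : x * (x + y + n)^n
        = ∑ k ∈ range (n+1), (n.choose k : ℤ) * cc y k * cc x (n-k) * (x + ((n-k:ℕ):ℤ)) := by
      rw [show x + y + (n:ℤ) = x + (y + n) by ring, ← base, Finset.mul_sum]
      apply Finset.sum_congr rfl
      intro k _
      have := cc_mul_self (y := x) (m := n - k)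
      linear_combination ((n.choose k : ℤ) * cc y k) * this
    rw [base2]
    rw [← Finset.sum_range_reflect]
    apply Finset.sum_congr rfl
    intro k hk
    rw [Finset.mem_range] at hk
    have h1 : n + 1 - 1 - k = n - k := by omega
    have h2 : n - (n - k) = k := by omega
    have h3 : n.choose (n - k) = n.choose k := Nat.choose_symm (by omega)
    rw [h1, h2, h3]
    ring
  have hsum : (x + y) * (x + y + n)^n
      = ∑ k ∈ range (n+1), (n.choose k : ℤ) * cc x k * cc y (n-k) * (x + y + n) := by
    rw [add_mul, E1, E2, ← Finset.sum_add_distrib]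
    apply Finset.sum_congr rfl
    intro k hk
    rw [Finset.mem_range] at hk
    have : ((n-k:ℕ):ℤ) + (k:ℤ) = (n:ℤ) := by push_cast; omega
    linear_combination ((n.choose k : ℤ) * cc x k * cc y (n-k)) * this
  rw [Finset.mul_sum, hsum]
  apply Finset.sum_congr rfl
  intro k _
  ring

lemma key_int (n : ℕ) (hn : 2 ≤ n) :
    ∑ k ∈ Ioo 0 n, (n.choose k : ℤ) * (k:ℤ)^(k-1) * ((n-k:ℕ):ℤ)^(n-k-1)
      = 2 * ((n:ℤ) - 1) * (n:ℤ)^(n-2) := by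
  obtain ⟨m, rfl⟩ : ∃ m, n = m + 2 := ⟨n - 2, by omega⟩
  set n := m + 2 with hn2
  set Gp : ℤ[X] := ∑ k ∈ Ioo 0 n, C (n.choose k : ℤ) * (X + C (k:ℤ))^(k-1) * (X + C ((n-k:ℕ):ℤ))^(n-k-1) with hGp
  set Q : ℤ[X] := C 2 * (C 2 * X + C (n:ℤ))^(m+1) - C 2 * (X + C (n:ℤ))^(m+1) with hQ
  have heq : ∀ t : ℤ, 1 ≤ t → (X * Gp).eval t = Q.eval t := by
    intro t ht
    have hb := babel n t t
    set B : ℤ := ∑ k ∈ range (n+1), (n.choose k : ℤ) * cc t k * cc t (n-k) with hB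
    have hBval : B = 2*t * (2*t + n)^(m+1) := by
      apply mul_left_cancel₀ (a := t + t + (n:ℤ)) (by intro h; omega)
      rw [hb, hn2]
      push_cast
      ring
    -- split B
    have hsplit : B = cc t n + (∑ k ∈ Ioo 0 n, (n.choose k : ℤ) * cc t k * cc t (n-k)) + cc t n := by
      rw [hB, Finset.sum_range_succ, Finset.range_eq_Ico,
        Finset.sum_eq_sum_Ico_succ_bot (by omega : 0 < n), Finset.Ico_add_one_left_eq_Ioo]
      simp [Nat.sub_self, cc]
    have hccn : cc t n = t * (t + n)^(m+1) := by
      rw [cc, if_neg (by omega), show n - 1 = m + 1 from rfl]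
    have hmid : ∀ k ∈ Ioo 0 n, (n.choose k : ℤ) * cc t k * cc t (n-k)
        = (n.choose k : ℤ) * ((t + k)^(k-1) * (t + ((n-k:ℕ):ℤ))^(n-k-1)) * t^2 := by
      intro k hk
      rw [Finset.mem_Ioo] at hk
      rw [cc, if_neg (by omega), cc, if_neg (by omega)]
      ring
    have hGev : Gp.eval t = ∑ k ∈ Ioo 0 n, (n.choose k : ℤ) * ((t + k)^(k-1) * (t + ((n-k:ℕ):ℤ))^(n-k-1)) := by
      rw [hGp, eval_finset_sum]
      apply Finset.sum_congr rfl
      intro k _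
      simp [mul_assoc]
    have hmain : Gp.eval t * t^2 = 2*t * (2*t + n)^(m+1) - 2 * t * (t + n)^(m+1) := by
      have h5 := hsplit
      rw [Finset.sum_congr rfl hmid, ← Finset.sum_mul, ← hGev, hccn, hBval] at h5
      linarith [h5]
    have ht0 : t ≠ 0 := by omega
    apply mul_left_cancel₀ ht0
    rw [eval_mul, eval_X, hQ]
    simp only [eval_sub, eval_mul, eval_pow, eval_add, eval_X, eval_C]
    nlinarith [hmain]
  have hPQ : X * Gp = Q := by
    have hsub : ∀ t ∈ Set.Ici (1:ℤ), (X * Gp - Q).IsRoot t := by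
      intro t ht
      simp only [IsRoot, eval_sub, sub_eq_zero]
      exact heq t ht
    have hinf : {x : ℤ | (X * Gp - Q).IsRoot x}.Infinite :=
      (Set.Ici_infinite 1).mono hsub
    exact sub_eq_zero.mp (Polynomial.eq_zero_of_infinite_isRoot _ hinf)
  have hcoeffL : (X * Gp).coeff 1 = ∑ k ∈ Ioo 0 n, (n.choose k : ℤ) * (k:ℤ)^(k-1) * ((n-k:ℕ):ℤ)^(n-k-1) := by
    rw [Polynomial.coeff_X_mul, Polynomial.coeff_zero_eq_eval_zero, hGp, eval_finset_sum]
    apply Finset.sum_congr rfl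
    intro k _
    simp
  have hcoeffR : Q.coeff 1 = 2 * ((n:ℤ) - 1) * (n:ℤ)^(n-2) := by
    have h1 : Q.coeff 1 = (derivative Q).coeff 0 := by
      rw [Polynomial.coeff_derivative]; ring
    rw [h1, Polynomial.coeff_zero_eq_eval_zero, hQ]
    simp only [derivative_sub, derivative_mul, derivative_C, derivative_pow, derivative_add,
      derivative_X, derivative_one, zero_mul, mul_zero, add_zero, zero_add, mul_one]
    simp only [eval_sub, eval_mul, eval_add, eval_pow, eval_X, eval_C, eval_natCast,
      eval_zero, eval_one, zero_mul, zero_add, mul_one, mul_zero, add_zero]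
    rw [show m + 1 - 1 = m from rfl, show n - 2 = m from rfl]
    push_cast
    rw [hn2]; push_cast; ring
  rw [← hcoeffL, hPQ, hcoeffR]

lemma key_nat (n : ℕ) (hn : 2 ≤ n) :
    ∑ k ∈ Ioo 0 n, n.choose k * k^(k-1) * (n-k)^(n-k-1) = 2 * ((n-1) * n^(n-2)) := by
  have h := key_int n hn
  have hc : ((∑ k ∈ Ioo 0 n, n.choose k * k^(k-1) * (n-k)^(n-k-1) : ℕ) : ℤ)
      = ((2 * ((n-1) * n^(n-2)) : ℕ) : ℤ) := by
    push_cast [Nat.cast_sub (by omega : 1 ≤ n)]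
    rw [h]
    ring
  exact Nat.cast_injective hc

lemma mpow (m : ℕ) (hm : 1 ≤ m) : m * m^(m-2) = m^(m-1) := by
  match m with
  | 1 => norm_num
  | (j+2) =>
    rw [show j + 2 - 2 = j from rfl, show j + 2 - 1 = j + 1 from rfl, pow_succ]
    ring

/-- Cayley's formula: the tree numbers `T d` determined by `T 1 = 1` and the
edge-elimination recursion `2(d-1) T d = ∑_{a+b=d, a,b≥1} a b C(d,a) T a T b`
satisfy `T d = d^(d-2)`. -/
theorem tree_count_eq_cayley (T : ℕ → ℕ) (h1 : T 1 = 1)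
    (hrec : ∀ d, 2 ≤ d →
      2 * ((d - 1) * T d) =
        ∑ a ∈ Finset.Ioo 0 d, a * (d - a) * Nat.choose d a * T a * T (d - a)) :
    ∀ d, 1 ≤ d → T d = d ^ (d - 2) := by
  intro d
  induction d using Nat.strong_induction_on with
  | _ d ih =>
    intro hd
    rcases eq_or_lt_of_le hd with h | h
    · rw [← h, h1]
      norm_num
    · have hd2 : 2 ≤ d := h
      have hr := hrec d hd2
      have hsum : ∑ a ∈ Finset.Ioo 0 d, a * (d - a) * Nat.choose d a * T a * T (d - a)
          = ∑ a ∈ Ioo 0 d, d.choose a * a^(a-1) * (d-a)^(d-a-1) := by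
        apply Finset.sum_congr rfl
        intro a ha
        rw [Finset.mem_Ioo] at ha
        rw [ih a (by omega) (by omega), ih (d-a) (by omega) (by omega)]
        calc a * (d - a) * Nat.choose d a * a^(a-2) * (d-a)^(d-a-2)
            = Nat.choose d a * ((a * a^(a-2)) * ((d-a) * (d-a)^(d-a-2))) := by ring
          _ = d.choose a * a^(a-1) * (d-a)^(d-a-1) := by
              rw [mpow a (by omega), mpow (d-a) (by omega)]
              ring
      rw [hsum, key_nat d hd2] at hr
      have h2 : (d - 1) * T d = (d-1) * d^(d-2) := by omega
      exact Nat.eq_of_mul_eq_mul_left (by omega) h2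
end

section
/- The generating function y(x) = Σ_{d≥1} T_d x^d/(d-1)! of labeled trees satisfies the differential equation (x² ∘ d/dx ∘ (1/x)) y = (1/2) x (d/dx) y², equivalently x·y' - y = x·y·y' as formal power series. -/
section TreeAux

open Polynomial

/-- Abel polynomials `A 0 = 1`, `A n = X (X + n)^(n-1)`. -/
noncomputable def abelP_s4 : ℕ → Polynomial ℚ
  | 0 => 1
  | n+1 => X * (X + C ((n : ℚ) + 1)) ^ n

lemma abelP_deriv (n : ℕ) :
    derivative (abelP_s4 (n+1)) = C ((n : ℚ) + 1) * (abelP_s4 n).comp (X + 1) := by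
  cases n with
  | zero => simp [abelP_s4]
  | succ m =>
    have hC : ((m : ℚ) + 1 + 1) = ((m : ℚ) + 1) + 1 := by ring
    simp only [abelP_s4, derivative_mul, derivative_X, derivative_pow, derivative_add,
      derivative_C, add_zero, one_mul, mul_comp, X_comp, add_comp, C_comp, pow_comp]
    push_cast
    have hp : (X + C ((m : ℚ) + 1 + 1)) ^ (m+1) = (X + C ((m : ℚ) + 1 + 1)) ^ m * (X + C ((m:ℚ)+1+1)) := pow_succ _ _
    have hq : C ((m : ℚ) + 1 + 1) = C ((m:ℚ)+1) + 1 := by rw [hC, C_add, C_1]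
    rw [hp, hq]
    ring

lemma abelP_coeff_zero (n : ℕ) : (abelP_s4 (n+1)).coeff 0 = 0 := by
  simp [abelP_s4, coeff_X_mul]

lemma abelP_coeff_one (n : ℕ) : (abelP_s4 (n+1)).coeff 1 = ((n : ℚ) + 1) ^ n := by
  have : (abelP_s4 (n+1)).coeff 1 = ((X + C ((n : ℚ) + 1)) ^ n).coeff 0 := by
    simp [abelP_s4, coeff_X_mul]
  rw [this, coeff_X_add_C_pow]
  simp

/-- Hurwitz–Abel identity:
`∑ k, C(n,k) (y+n-k)^(n-k) · A_k(x) = (x + y + n)^n`. -/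
lemma hurwitz (n : ℕ) (y : ℚ) :
    ∑ k ∈ Finset.range (n+1),
      C ((n.choose k : ℚ) * (y + ((n - k : ℕ) : ℚ)) ^ (n - k)) * abelP_s4 k
      = (X + C (y + n)) ^ n := by
  induction n generalizing y with
  | zero => simp [abelP_s4]
  | succ n ih =>
    set L : Polynomial ℚ := ∑ k ∈ Finset.range (n+2),
      C (((n+1).choose k : ℚ) * (y + (((n+1) - k : ℕ) : ℚ)) ^ ((n+1) - k)) * abelP_s4 k with hL
    set R : Polynomial ℚ := (X + C (y + (n+1 : ℕ))) ^ (n+1) with hR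
    have hcast : ∀ k : ℕ, (((n+1).choose (k+1) : ℚ)) * ((k : ℚ) + 1)
        = ((n : ℚ) + 1) * (n.choose k : ℚ) := by
      intro k
      have h := Nat.add_one_mul_choose_eq n k
      have h2 : ((n:ℚ)+1) * (n.choose k : ℚ) = ((n+1).choose (k+1) : ℚ) * ((k:ℚ)+1) := by
        exact_mod_cast h
      linarith
    have hderiv : derivative L = derivative R := by
      rw [hL, hR, derivative_sum, Finset.sum_range_succ']
      have h0 : derivative (abelP_s4 0) = 0 := by simp [abelP_s4]
      simp only [derivative_mul, derivative_C, zero_mul, zero_add, h0, mul_zero, add_zero]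
      have hterm : ∀ k ∈ Finset.range (n+1),
          C (((n+1).choose (k+1) : ℚ) * (y + (((n+1) - (k+1) : ℕ) : ℚ)) ^ ((n+1) - (k+1))) *
            derivative (abelP_s4 (k+1))
          = C ((n:ℚ)+1) *
            (C ((n.choose k : ℚ) * (y + ((n - k : ℕ) : ℚ)) ^ (n - k)) * (abelP_s4 k).comp (X+1)) := by
        intro k _
        rw [abelP_deriv, Nat.succ_sub_succ]
        rw [← mul_assoc, ← mul_assoc, ← C_mul, ← C_mul]
        congr 2
        linear_combination (y + ((n - k : ℕ) : ℚ)) ^ (n - k) * hcast k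
      rw [Finset.sum_congr rfl hterm, ← Finset.mul_sum]
      have hsum : (∑ k ∈ Finset.range (n+1),
          C ((n.choose k : ℚ) * (y + ((n - k : ℕ) : ℚ)) ^ (n - k)) * (abelP_s4 k).comp (X+1))
          = ((X + C (y + n)) ^ n).comp (X + 1) := by
        rw [← ih y, sum_comp]
        simp [mul_comp]
      rw [hsum]
      simp only [pow_comp, add_comp, X_comp, C_comp, derivative_pow, derivative_add,
        derivative_X, derivative_C, add_zero, mul_one]
      have hC : C (y + ((n:ℕ)+1 : ℕ)) = C (y + (n:ℚ)) + 1 := by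
        push_cast; rw [← C_1, ← C_add]; ring_nf
      rw [hC]
      push_cast
      ring_nf
    have hval : L.coeff 0 = R.coeff 0 := by
      rw [hL, hR, finset_sum_coeff]
      rw [Finset.sum_eq_single 0]
      · simp only [coeff_C_mul]
        rw [show abelP_s4 0 = 1 from rfl]
        simp only [Nat.choose_zero_right, Nat.cast_one, one_mul, Nat.sub_zero,
          Polynomial.coeff_one_zero, mul_one]
        rw [coeff_zero_eq_eval_zero]
        simp
      · intro k hk hk0
        obtain ⟨m, rfl⟩ := Nat.exists_eq_succ_of_ne_zero hk0
        rw [coeff_C_mul, abelP_coeff_zero, mul_zero]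
      · intro h; simp at h
    have hzero : L - R = 0 := by
      have hd : derivative (L - R) = 0 := by rw [derivative_sub, hderiv, sub_self]
      have := eq_C_of_derivative_eq_zero hd
      rw [this, coeff_sub, hval, sub_self, map_zero]
    have := sub_eq_zero.mp hzero
    exact this

/-- The Abel/Hurwitz sum identity with `y = 0`, extracting the coefficient of `x`. -/
lemma abel_sum (n : ℕ) :
    ∑ k ∈ Finset.range n,
      (n.choose (k+1) : ℚ) * (((n - (k+1) : ℕ)) : ℚ) ^ (n - (k+1)) * ((k : ℚ) + 1) ^ k
      = (n : ℚ) ^ (n - 1) * n := by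
  have h := congrArg (fun p => Polynomial.coeff p 1) (hurwitz n 0)
  simp only [finset_sum_coeff, coeff_C_mul, zero_add] at h
  rw [Finset.sum_range_succ'] at h
  rw [show abelP_s4 0 = 1 from rfl, Polynomial.coeff_one] at h
  simp only [Nat.succ_sub_succ, abelP_coeff_one] at h
  rw [coeff_X_add_C_pow] at h
  simpa using h

/-- The tree generating function coefficients `tc d = d^(d-1)/d!`. -/
noncomputable def tc (d : ℕ) : ℚ := if d = 0 then 0 else (d : ℚ) ^ (d - 1) / d.factorial

lemma tc_succ (d : ℕ) : tc (d+1) = ((d : ℚ) + 1) ^ d / (d+1).factorial := by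
  simp [tc]

lemma scalar_sum (n : ℕ) :
    (n : ℚ) * tc (n+1)
      = ∑ i ∈ Finset.range (n+1), tc i * (tc (n-i+1) * (((n-i : ℕ) : ℚ) + 1)) := by
  rw [Finset.sum_range_succ']
  have h0 : tc 0 = 0 := by simp [tc]
  rw [h0, zero_mul, add_zero]
  have hterm : ∀ j ∈ Finset.range n,
      tc (j+1) * (tc (n-(j+1)+1) * ((((n-(j+1)) : ℕ) : ℚ) + 1))
        = ((n+1).choose (j+1) : ℚ) * (((n-j : ℕ)) : ℚ)^(n-j) * ((j : ℚ)+1)^j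
            / (n+1).factorial := by
    intro j hj
    have hjn : j < n := Finset.mem_range.mp hj
    have h1 : n - (j+1) + 1 = n - j := by omega
    have h2 : (((n-(j+1)) : ℕ) : ℚ) + 1 = ((n - j : ℕ) : ℚ) := by
      rw [← h1]; push_cast; ring
    rw [h1, h2]
    have hnj : n - j ≠ 0 := by omega
    have htc : tc (n-j) = (((n-j : ℕ)) : ℚ)^(n-j-1)/((n-j).factorial) := by
      simp [tc, hnj]
    rw [tc_succ, htc]
    have hch : (((n+1).choose (j+1) : ℕ) : ℚ)
        = ((n+1).factorial : ℚ) / ((j+1).factorial * (n-j).factorial) := by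
      rw [Nat.cast_choose ℚ (by omega : j+1 ≤ n+1), Nat.succ_sub_succ]
    rw [hch]
    have hpow : (((n-j : ℕ)) : ℚ)^(n-j-1) * ((n-j : ℕ) : ℚ) = ((n-j : ℕ) : ℚ)^(n-j) := by
      rw [← pow_succ, Nat.sub_add_cancel (by omega : 1 ≤ n - j)]
    have f1 : ((j+1).factorial : ℚ) ≠ 0 := Nat.cast_ne_zero.mpr (Nat.factorial_ne_zero _)
    have f2 : ((n-j).factorial : ℚ) ≠ 0 := Nat.cast_ne_zero.mpr (Nat.factorial_ne_zero _)
    have f3 : ((n+1).factorial : ℚ) ≠ 0 := Nat.cast_ne_zero.mpr (Nat.factorial_ne_zero _)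
    field_simp
    linear_combination hpow
  rw [Finset.sum_congr rfl hterm, ← Finset.sum_div]
  have hk := abel_sum (n+1)
  rw [Finset.sum_range_succ] at hk
  simp only [Nat.succ_sub_succ, Nat.choose_self, Nat.cast_one, one_mul, Nat.sub_self,
    Nat.cast_zero, Nat.cast_add, Nat.cast_one, pow_zero, mul_one, Nat.add_sub_cancel,
    Nat.sub_zero] at hk
  have hk' : ∑ i ∈ Finset.range n,
      (((n+1).choose (i+1) : ℕ) : ℚ) * (((n-i : ℕ)) : ℚ)^(n-i) * ((i : ℚ)+1)^i
      = ((n:ℚ)+1)^n * ((n:ℚ)+1) - ((n:ℚ)+1)^n := by linarith [hk]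
  rw [tc_succ, hk']
  have f3 : ((n+1).factorial : ℚ) ≠ 0 := Nat.cast_ne_zero.mpr (Nat.factorial_ne_zero _)
  field_simp
  ring

end TreeAux

open PowerSeries

lemma tree_coeff_derivativeFun (f : PowerSeries ℚ) (n : ℕ) :
    coeff n f.derivativeFun = coeff (n+1) f * (n+1) := coeff_derivative f n

/-- The tree generating function `y = ∑_{d≥1} d^(d-1)/d! x^d` satisfies the
differential equation `x y' - y = x y y'` (the form of
`(x² ∘ d/dx ∘ 1/x) y = (1/2) x d/dx y²`) as formal power series. -/
theorem tree_generating_function_ODE :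
    let y : PowerSeries ℚ :=
      PowerSeries.mk fun d => if d = 0 then 0 else (d : ℚ) ^ (d - 1) / d.factorial
    PowerSeries.X * PowerSeries.derivativeFun y - y =
      PowerSeries.X * y * PowerSeries.derivativeFun y := by
  intro y
  have hy : y = PowerSeries.mk tc := rfl
  rw [hy]
  ext n
  rw [map_sub]
  cases n with
  | zero =>
    rw [mul_assoc]
    simp [PowerSeries.coeff_zero_X_mul, tc]
  | succ n =>
    rw [mul_assoc, PowerSeries.coeff_succ_X_mul, PowerSeries.coeff_succ_X_mul,
      tree_coeff_derivativeFun, PowerSeries.coeff_mul,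
      Finset.Nat.sum_antidiagonal_eq_sum_range_succ_mk]
    simp only [PowerSeries.coeff_mk, tree_coeff_derivativeFun]
    rw [← scalar_sum n]
    ring
end

section
/- The function F(z₁,z₂) = log((z₁-z₂)/(x(z₁)-x(z₂))) - (z₁^r + z₂^r), with x(z) = z·e^{-z^r}, satisfies the PDE (1/r)(z₁ ∂/∂z₁ + z₂ ∂/∂z₂) F = (x₁·z₁^r - x₂·z₂^r)/(x₁ - x₂) - (z₁^r + z₂^r), where xᵢ = x(zᵢ). -/
/-- The `r`-Lambert parametrization `x(z) = z e^(-z^r)`. -/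
noncomputable def xL (r : ℕ) (z : ℂ) : ℂ := z * Complex.exp (-z ^ r)

/-- The two-point function `F₀,₂(z₁,z₂) = log((z₁-z₂)/(x(z₁)-x(z₂))) - (z₁^r + z₂^r)`. -/
noncomputable def F02 (r : ℕ) (z₁ z₂ : ℂ) : ℂ :=
  Complex.log ((z₁ - z₂) / (xL r z₁ - xL r z₂)) - (z₁ ^ r + z₂ ^ r)

lemma xL_hasDerivAt (m : ℕ) (z : ℂ) :
    HasDerivAt (xL (m + 1)) (Complex.exp (-z ^ (m + 1)) * (1 - (m + 1 : ℂ) * z ^ (m + 1))) z := by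
  have h1 : HasDerivAt (fun w : ℂ => -(w ^ (m + 1))) (-((m + 1 : ℂ) * z ^ m)) z := by
    have := (hasDerivAt_pow (m + 1) z).neg
    push_cast at this
    exact this
  have h2 := (hasDerivAt_id z).mul h1.cexp
  simp only [id_eq] at h2
  have key : 1 * Complex.exp (-z ^ (m + 1)) +
      z * (Complex.exp (-z ^ (m + 1)) * -((m + 1 : ℂ) * z ^ m)) =
      Complex.exp (-z ^ (m + 1)) * (1 - (m + 1 : ℂ) * z ^ (m + 1)) := by
    rw [pow_succ]; ring
  rw [key] at h2
  unfold xL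
  exact h2

/-- `F₀,₂` satisfies the PDE
`(1/r)(z₁ ∂₁ + z₂ ∂₂) F = (x₁ z₁^r - x₂ z₂^r)/(x₁ - x₂) - (z₁^r + z₂^r)`. -/
theorem F02_satisfies_PDE (r : ℕ) (hr : 0 < r) (z₁ z₂ : ℂ) (hz : z₁ ≠ z₂)
    (hx : xL r z₁ ≠ xL r z₂)
    (hslit : (z₁ - z₂) / (xL r z₁ - xL r z₂) ∈ Complex.slitPlane) :
    (1 / (r : ℂ)) *
        (z₁ * deriv (fun w => F02 r w z₂) z₁ + z₂ * deriv (fun w => F02 r z₁ w) z₂) =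
      (xL r z₁ * z₁ ^ r - xL r z₂ * z₂ ^ r) / (xL r z₁ - xL r z₂) -
        (z₁ ^ r + z₂ ^ r) := by
  obtain ⟨m, rfl⟩ : ∃ m, r = m + 1 := ⟨r - 1, (Nat.succ_pred_eq_of_pos hr).symm⟩
  have hd : xL (m + 1) z₁ - xL (m + 1) z₂ ≠ 0 := sub_ne_zero.mpr hx
  have hs : z₁ - z₂ ≠ 0 := sub_ne_zero.mpr hz
  have hm1 : ((m : ℂ) + 1) ≠ 0 := by
    have : ((m + 1 : ℕ) : ℂ) ≠ 0 := Nat.cast_ne_zero.mpr (Nat.succ_ne_zero m)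
    push_cast at this; exact this
  set E₁ := Complex.exp (-z₁ ^ (m + 1)) * (1 - ((m : ℂ) + 1) * z₁ ^ (m + 1)) with hE₁
  set E₂ := Complex.exp (-z₂ ^ (m + 1)) * (1 - ((m : ℂ) + 1) * z₂ ^ (m + 1)) with hE₂
  -- derivative in the first variable
  have hg1 : HasDerivAt (fun w => (w - z₂) / (xL (m + 1) w - xL (m + 1) z₂))
      ((1 * (xL (m + 1) z₁ - xL (m + 1) z₂) - (z₁ - z₂) * E₁)
        / (xL (m + 1) z₁ - xL (m + 1) z₂) ^ 2) z₁ := by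
    have h := ((hasDerivAt_id z₁).sub_const z₂).div
      ((xL_hasDerivAt m z₁).sub_const (xL (m + 1) z₂)) hd
    simp at h ⊢; exact h
  have hlog1 := hg1.clog hslit
  have hpow1 : HasDerivAt (fun w : ℂ => w ^ (m + 1) + z₂ ^ (m + 1))
      (((m : ℂ) + 1) * z₁ ^ m) z₁ := by
    have := (hasDerivAt_pow (m + 1) z₁).add_const (z₂ ^ (m + 1))
    push_cast at this; simpa using this
  have hF1 : HasDerivAt (fun w => F02 (m + 1) w z₂)
      ((1 * (xL (m + 1) z₁ - xL (m + 1) z₂) - (z₁ - z₂) * E₁)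
          / (xL (m + 1) z₁ - xL (m + 1) z₂) ^ 2
          / ((z₁ - z₂) / (xL (m + 1) z₁ - xL (m + 1) z₂))
        - ((m : ℂ) + 1) * z₁ ^ m) z₁ := by
    unfold F02
    exact hlog1.sub hpow1
  -- derivative in the second variable
  have hg2 : HasDerivAt (fun w => (z₁ - w) / (xL (m + 1) z₁ - xL (m + 1) w))
      ((-1 * (xL (m + 1) z₁ - xL (m + 1) z₂) - (z₁ - z₂) * -E₂)
        / (xL (m + 1) z₁ - xL (m + 1) z₂) ^ 2) z₂ := by
    have h := ((hasDerivAt_id z₂).const_sub z₁).div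
      ((xL_hasDerivAt m z₂).const_sub (xL (m + 1) z₁)) hd
    simp at h ⊢; exact h
  have hlog2 := hg2.clog hslit
  have hpow2 : HasDerivAt (fun w : ℂ => z₁ ^ (m + 1) + w ^ (m + 1))
      (((m : ℂ) + 1) * z₂ ^ m) z₂ := by
    have := (hasDerivAt_pow (m + 1) z₂).const_add (z₁ ^ (m + 1))
    push_cast at this; simpa using this
  have hF2 : HasDerivAt (fun w => F02 (m + 1) z₁ w)
      ((-1 * (xL (m + 1) z₁ - xL (m + 1) z₂) - (z₁ - z₂) * -E₂)
          / (xL (m + 1) z₁ - xL (m + 1) z₂) ^ 2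
          / ((z₁ - z₂) / (xL (m + 1) z₁ - xL (m + 1) z₂))
        - ((m : ℂ) + 1) * z₂ ^ m) z₂ := by
    unfold F02
    exact hlog2.sub hpow2
  rw [hF1.deriv, hF2.deriv]
  -- simplify the quotient derivatives
  have hD1 : (1 * (xL (m + 1) z₁ - xL (m + 1) z₂) - (z₁ - z₂) * E₁)
      / (xL (m + 1) z₁ - xL (m + 1) z₂) ^ 2
      / ((z₁ - z₂) / (xL (m + 1) z₁ - xL (m + 1) z₂)) =
      1 / (z₁ - z₂) - E₁ / (xL (m + 1) z₁ - xL (m + 1) z₂) := by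
    field_simp
  have hD2 : (-1 * (xL (m + 1) z₁ - xL (m + 1) z₂) - (z₁ - z₂) * -E₂)
      / (xL (m + 1) z₁ - xL (m + 1) z₂) ^ 2
      / ((z₁ - z₂) / (xL (m + 1) z₁ - xL (m + 1) z₂)) =
      -(1 / (z₁ - z₂)) + E₂ / (xL (m + 1) z₁ - xL (m + 1) z₂) := by
    field_simp
    ring
  rw [hD1, hD2, hE₁, hE₂]
  have hzE₁ : z₁ * (Complex.exp (-z₁ ^ (m + 1)) * (1 - ((m : ℂ) + 1) * z₁ ^ (m + 1))) =
      xL (m + 1) z₁ * (1 - ((m : ℂ) + 1) * z₁ ^ (m + 1)) := by unfold xL; ring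
  have hzE₂ : z₂ * (Complex.exp (-z₂ ^ (m + 1)) * (1 - ((m : ℂ) + 1) * z₂ ^ (m + 1))) =
      xL (m + 1) z₂ * (1 - ((m : ℂ) + 1) * z₂ ^ (m + 1)) := by unfold xL; ring
  simp only [xL] at hd ⊢
  rw [pow_succ z₁ m, pow_succ z₂ m] at hd ⊢
  push_cast
  generalize Complex.exp (-(z₁ ^ m * z₁)) = a at hd ⊢
  generalize Complex.exp (-(z₂ ^ m * z₂)) = b at hd ⊢
  field_simp [hd, hs, hm1]
  ring
end

section
/- The Euler derivative identity (z₁ ∂/∂z₁ + z₂ ∂/∂z₂) log((z₁-z₂)/(x(z₁)-x(z₂))) = r·(x₁ z₁^r - x₂ z₂^r)/(x₁ - x₂), where x(z) = z·e^{-z^r} and xᵢ = x(zᵢ), holds wherever z₁ ≠ z₂ and x₁ ≠ x₂. -/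
lemma hasDerivAt_xL (r : ℕ) (hr : 0 < r) (z : ℂ) :
    HasDerivAt (xL r) (Complex.exp (-z ^ r) * (1 - (r : ℂ) * z ^ r)) z := by
  have h1 : HasDerivAt (fun w : ℂ => -w ^ r) (-((r : ℂ) * z ^ (r - 1))) z := by
    exact ((hasDerivAt_pow r z).neg)
  have h2 : HasDerivAt (fun w : ℂ => Complex.exp (-w ^ r))
      (Complex.exp (-z ^ r) * -((r : ℂ) * z ^ (r - 1))) z := by
    exact (Complex.hasDerivAt_exp (-z ^ r)).comp z h1
  have h3 : HasDerivAt (xL r)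
      (1 * Complex.exp (-z ^ r) + z * (Complex.exp (-z ^ r) * -((r : ℂ) * z ^ (r - 1)))) z :=
    (hasDerivAt_id z).mul h2
  have hzz : z * z ^ (r - 1) = z ^ r := by
    rw [← pow_succ']
    congr 1
    omega
  convert h3 using 1
  have : z * (Complex.exp (-z ^ r) * -((r : ℂ) * z ^ (r - 1)))
      = Complex.exp (-z ^ r) * -((r : ℂ) * (z * z ^ (r - 1))) := by ring
  rw [this, hzz]
  ring

/-- The Euler derivative identity
`(z₁ ∂₁ + z₂ ∂₂) log((z₁-z₂)/(x(z₁)-x(z₂))) = r (x₁ z₁^r - x₂ z₂^r)/(x₁ - x₂)`. -/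
theorem euler_derivative_of_log (r : ℕ) (hr : 0 < r) (z₁ z₂ : ℂ) (hz : z₁ ≠ z₂)
    (hx : xL r z₁ ≠ xL r z₂)
    (hslit : (z₁ - z₂) / (xL r z₁ - xL r z₂) ∈ Complex.slitPlane) :
    z₁ * deriv (fun w => Complex.log ((w - z₂) / (xL r w - xL r z₂))) z₁ +
        z₂ * deriv (fun w => Complex.log ((z₁ - w) / (xL r z₁ - xL r w))) z₂ =
      (r : ℂ) * (xL r z₁ * z₁ ^ r - xL r z₂ * z₂ ^ r) / (xL r z₁ - xL r z₂) := by
  set E₁ := Complex.exp (-z₁ ^ r) with hE₁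
  set E₂ := Complex.exp (-z₂ ^ r) with hE₂
  have hxΔ : xL r z₁ - xL r z₂ ≠ 0 := sub_ne_zero.mpr hx
  have hzΔ : z₁ - z₂ ≠ 0 := sub_ne_zero.mpr hz
  set d₁ := E₁ * (1 - (r : ℂ) * z₁ ^ r) with hd₁
  set d₂ := E₂ * (1 - (r : ℂ) * z₂ ^ r) with hd₂
  have hx1 := hasDerivAt_xL r hr z₁
  have hx2 := hasDerivAt_xL r hr z₂
  -- first function
  have hg1 : HasDerivAt (fun w => (w - z₂) / (xL r w - xL r z₂))
      ((1 * (xL r z₁ - xL r z₂) - (z₁ - z₂) * d₁) / (xL r z₁ - xL r z₂) ^ 2) z₁ := by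
    exact ((hasDerivAt_id z₁).sub_const z₂).div (hx1.sub_const (xL r z₂)) hxΔ
  have hg2 : HasDerivAt (fun w => (z₁ - w) / (xL r z₁ - xL r w))
      ((-1 * (xL r z₁ - xL r z₂) - (z₁ - z₂) * -d₂) / (xL r z₁ - xL r z₂) ^ 2) z₂ := by
    exact ((hasDerivAt_id z₂).const_sub z₁).div ((hx2.const_sub (xL r z₁))) hxΔ
  have hlog1 : HasDerivAt (fun w => Complex.log ((w - z₂) / (xL r w - xL r z₂)))
      (((z₁ - z₂) / (xL r z₁ - xL r z₂))⁻¹ *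
        ((1 * (xL r z₁ - xL r z₂) - (z₁ - z₂) * d₁) / (xL r z₁ - xL r z₂) ^ 2)) z₁ := by
    exact (Complex.hasDerivAt_log hslit).comp z₁ hg1
  have hlog2 : HasDerivAt (fun w => Complex.log ((z₁ - w) / (xL r z₁ - xL r w)))
      (((z₁ - z₂) / (xL r z₁ - xL r z₂))⁻¹ *
        ((-1 * (xL r z₁ - xL r z₂) - (z₁ - z₂) * -d₂) / (xL r z₁ - xL r z₂) ^ 2)) z₂ := by
    exact (Complex.hasDerivAt_log hslit).comp z₂ hg2
  rw [hlog1.deriv, hlog2.deriv]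
  simp only [xL, ← hE₁, ← hE₂, hd₁, hd₂] at hxΔ ⊢
  field_simp
  ring
end
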